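/- Every continuous open-LC₁ function from a topological space onto a metrizable crowded (perfect, i.e., without isolated points) space is an open map. -/

import Mathlib

def IsLC {X : Type*} [TopologicalSpace X] (E : Set X) : Prop :=
  ∃ U F : Set X, IsOpen U ∧ IsClosed F ∧ E = U ∩ F

/-- Every continuous open-LC₁ function onto a metrizable crowded space is open. -/
theorem openLC1_is_open {X Y : Type*} [TopologicalSpace X] [MetricSpace Y]
    (f : X → Y) (hf : Continuous f) (hsurj : Function.Surjective f)
    (hcrowded : ∀ y : Y, ¬ IsOpen ({y} : Set Y))
    (hLC : ∀ U : Set X, IsOpen U → IsLC (f '' U)) :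
    IsOpenMap f := by
  intro U hU
  by_contra hopen
  set E := f '' U with hE
  rw [Metric.isOpen_iff] at hopen
  push_neg at hopen
  obtain ⟨y, hyE, hy⟩ := hopen
  have hy' : ∀ r : ℝ, 0 < r → ∃ w, w ∉ E ∧ dist w y < r := by
    intro r hr
    obtain ⟨w, hw1, hw2⟩ := Set.not_subset.1 (hy r hr)
    exact ⟨w, hw2, by simpa [Metric.mem_ball] using hw1⟩
  obtain ⟨z0, hz0E, hz0d⟩ := hy' 1 one_pos
  have key : ∀ (n : ℕ) (p : Y), ∃ w, 0 < dist p y →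
      w ∉ E ∧ dist w y < min (dist p y / 3) ((1/2 : ℝ)^(n+1)) := by
    intro n p
    by_cases h : 0 < dist p y
    · obtain ⟨w, hw1, hw2⟩ := hy' (min (dist p y / 3) ((1/2:ℝ)^(n+1))) (by positivity)
      exact ⟨w, fun _ => ⟨hw1, hw2⟩⟩
    · exact ⟨y, fun h' => absurd h' h⟩
  choose g hg using key
  set z : ℕ → Y := fun n => Nat.rec (motive := fun _ => Y) z0 g n with hzdef
  have hzE : ∀ n, z n ∉ E := by
    intro n; induction n with
    | zero => exact hz0E
    | succ n ih =>
      have hpos : 0 < dist (z n) y := dist_pos.2 (fun h => ih (h ▸ hyE))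
      exact (hg n (z n) hpos).1
  have hpos : ∀ n, 0 < dist (z n) y := fun n => dist_pos.2 (fun h => hzE n (h ▸ hyE))
  have hstep : ∀ n, dist (z (n+1)) y < min (dist (z n) y / 3) ((1/2:ℝ)^(n+1)) :=
    fun n => (hg n (z n) (hpos n)).2
  have hsmall : ∀ n, dist (z n) y < (1/2:ℝ)^n := by
    intro n; cases n with
    | zero => rw [pow_zero]; exact hz0d
    | succ n => exact (hstep n).trans_le (min_le_right _ _)
  have hdec : ∀ n, dist (z (n+1)) y < dist (z n) y / 3 :=
    fun n => (hstep n).trans_le (min_le_left _ _)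
  have hlt : ∀ n m, n < m → dist (z m) y < dist (z n) y / 3 := by
    intro n m hnm
    induction m with
    | zero => omega
    | succ m ih =>
      rcases Nat.lt_succ_iff_lt_or_eq.1 hnm with h | h
      · have h1 := ih h
        have h2 := hdec m
        have h3 := hpos m
        linarith
      · subst h; exact hdec n
  have hsep : ∀ n m, m ≠ n → dist (z n) y / 2 ≤ dist (z n) (z m) := by
    intro n m hmn
    rcases lt_or_gt_of_ne hmn with h | h
    · -- m < n : dist (z n) y < dist (z m) y / 3
      have h1 := hlt m n h
      have htri2 : dist (z m) y ≤ dist (z m) (z n) + dist (z n) y := dist_triangle _ _ _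
      have hc : dist (z m) (z n) = dist (z n) (z m) := dist_comm _ _
      have := hpos n
      linarith
    · -- n < m
      have h1 := hlt n m h
      have htri : dist (z n) y ≤ dist (z n) (z m) + dist (z m) y := dist_triangle _ _ _
      have := hpos n
      linarith
  have htend : Filter.Tendsto z Filter.atTop (nhds y) := by
    rw [tendsto_iff_dist_tendsto_zero]
    apply squeeze_zero (fun n => dist_nonneg) (fun n => (hsmall n).le)
    exact tendsto_pow_atTop_nhds_zero_of_lt_one (by norm_num) (by norm_num)
  set K : Set Y := insert y (Set.range z) with hK
  have hKc : IsClosed K := htend.isCompact_insert_range.isClosed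
  set O : Set Y := Kᶜ with hO
  have hOopen : IsOpen O := hKc.isOpen_compl
  have hclO : ∀ n, z n ∈ closure O := by
    intro n
    rw [Metric.mem_closure_iff]
    intro ε hε
    set s := min ε (dist (z n) y / 2) with hs
    have hspos : 0 < s := lt_min hε (by linarith [hpos n])
    have hns : ¬ Metric.ball (z n) s ⊆ {z n} := by
      intro hsub
      apply hcrowded (z n)
      have heq : Metric.ball (z n) s = {z n} :=
        subset_antisymm hsub (by simp [Metric.mem_ball, hspos])
      rw [← heq]; exact Metric.isOpen_ball
    obtain ⟨w, hw1, hw2⟩ := Set.not_subset.1 hns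
    rw [Metric.mem_ball] at hw1
    have hwzn : w ≠ z n := by simpa using hw2
    have hws : dist w (z n) < dist (z n) y / 2 := hw1.trans_le (min_le_right _ _)
    refine ⟨w, ?_, by rw [dist_comm]; exact hw1.trans_le (min_le_left _ _)⟩
    simp only [hO, Set.mem_compl_iff, hK, Set.mem_insert_iff, Set.mem_range, not_or, not_exists]
    constructor
    · intro hwy
      rw [hwy, dist_comm] at hws
      linarith [hpos n]
    · intro m hm
      by_cases hmn : m = n
      · exact hwzn ((hmn ▸ hm).symm)
      · have h1 := hsep n m hmn
        rw [hm] at h1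
        rw [dist_comm] at hws
        linarith
  have hW : IsOpen (U ∪ f ⁻¹' O) := hU.union (hOopen.preimage hf)
  obtain ⟨V, F, hVopen, hFclosed, hVF⟩ := hLC _ hW
  rw [Set.image_union, Set.image_preimage_eq O hsurj] at hVF
  have hyV : y ∈ V := by
    have hyEO : y ∈ E ∪ O := Or.inl hyE
    rw [hVF] at hyEO; exact hyEO.1
  obtain ⟨ρ, hρ, hball⟩ := Metric.isOpen_iff.1 hVopen y hyV
  obtain ⟨n, hn⟩ := exists_pow_lt_of_lt_one hρ (by norm_num : (1/2:ℝ) < 1)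
  have hznV : z n ∈ V := hball (by rw [Metric.mem_ball]; exact (hsmall n).trans hn)
  have hznF : z n ∈ F := by
    have h1 : E ∪ O ⊆ F := by rw [hVF]; exact Set.inter_subset_right
    have h2 : closure (E ∪ O) ⊆ F := hFclosed.closure_subset_iff.2 h1
    exact h2 (closure_mono Set.subset_union_right (hclO n))
  have hzn : z n ∈ E ∪ O := by rw [hVF]; exact ⟨hznV, hznF⟩
  rcases hzn with h | h
  · exact hzE n h
  · exact h (Set.mem_insert_iff.2 (Or.inr ⟨n, rfl⟩))
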